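/- arXiv:1810.08436 — 3 statements merged into one kernel-verified Lean document; each statement's English description precedes it below -/
import Mathlib

section
/- For every natural number n ≥ 1, the number of labeled trees on n vertices is n^(n-2) (Cayley's formula). -/
open Finset Function
namespace Cx
variable {n : ℕ} [NeZero n]

def IsPFun (S : Finset (Fin n)) (f : Fin n → Fin n) : Prop :=
  (∀ v ∈ S, f v ∈ S) ∧ f 0 = 0 ∧ (∀ v ∈ S, ∃ k, f^[k] v = 0) ∧ (∀ v ∉ S, f v = v)

def leafSet (S : Finset (Fin n)) (f : Fin n → Fin n) : Finset (Fin n) :=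
  (S.erase 0).filter (fun v => ∀ w ∈ S, f w ≠ v)

lemma mem_leafSet {S : Finset (Fin n)} {f} {v} :
    v ∈ leafSet S f ↔ v ∈ S ∧ v ≠ 0 ∧ ∀ w ∈ S, f w ≠ v := by
  simp [leafSet, Finset.mem_filter, Finset.mem_erase]; tauto

lemma IsPFun.ne_self {S : Finset (Fin n)} {f} (hf : IsPFun S f) {v} (hv : v ∈ S) (hv0 : v ≠ 0) :
    f v ≠ v := by
  intro h
  obtain ⟨k, hk⟩ := hf.2.2.1 v hv
  rw [Function.iterate_fixed h] at hk
  exact hv0 hk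

open Classical in
noncomputable def dep (f : Fin n → Fin n) (v : Fin n) : ℕ :=
  if h : ∃ k, f^[k] v = 0 then Nat.find h else 0

lemma dep_spec {f : Fin n → Fin n} {v} (h : ∃ k, f^[k] v = 0) : f^[dep f v] v = 0 := by
  classical rw [dep, dif_pos h]; convert Nat.find_spec h

lemma dep_le {f : Fin n → Fin n} {v} (k : ℕ) (hk : f^[k] v = 0) : dep f v ≤ k := by
  have h : ∃ k, f^[k] v = 0 := ⟨k, hk⟩
  classical rw [dep, dif_pos h]; convert Nat.find_min' h hk

lemma dep_pos {f : Fin n → Fin n} {v} (h : ∃ k, f^[k] v = 0) (hv : v ≠ 0) : 0 < dep f v := by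
  rcases Nat.eq_zero_or_pos (dep f v) with h0 | h0
  · have := dep_spec h; rw [h0] at this; exact absurd this hv
  · exact h0

lemma dep_apply_lt {S : Finset (Fin n)} {f} (hf : IsPFun S f) {v} (hv : v ∈ S) (hv0 : v ≠ 0) :
    dep f (f v) < dep f v := by
  have h : ∃ k, f^[k] v = 0 := hf.2.2.1 v hv
  have hp := dep_pos h hv0
  have : f^[dep f v - 1] (f v) = 0 := by
    rw [← Function.iterate_succ_apply, Nat.succ_eq_add_one, Nat.sub_add_cancel hp]
    exact dep_spec h
  calc dep f (f v) ≤ dep f v - 1 := dep_le _ this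
  _ < dep f v := by omega

lemma exists_leaf {S : Finset (Fin n)} {f} (hf : IsPFun S f) (h0 : 0 ∈ S) (h2 : 2 ≤ S.card) :
    (leafSet S f).Nonempty := by
  have hne : (S.erase 0).Nonempty := by
    rw [← Finset.card_pos, Finset.card_erase_of_mem h0]; omega
  obtain ⟨v, hv, hmax⟩ := Finset.exists_max_image (S.erase 0) (dep f) hne
  refine ⟨v, mem_leafSet.2 ⟨Finset.mem_of_mem_erase hv, (Finset.mem_erase.1 hv).1, fun w hw hfw => ?_⟩⟩
  have hw0 : w ≠ 0 := by rintro rfl; rw [hf.2.1] at hfw; exact (Finset.mem_erase.1 hv).1 hfw.symm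
  have := dep_apply_lt hf hw hw0
  rw [hfw] at this
  exact absurd (hmax w (Finset.mem_erase.2 ⟨hw0, hw⟩)) (by omega)

lemma orbit_mem {S : Finset (Fin n)} {f} (hf : IsPFun S f) {v} (hv : v ∈ S) (k : ℕ) :
    f^[k] v ∈ S := by
  induction k with
  | zero => exact hv
  | succ k ih => rw [Function.iterate_succ_apply']; exact hf.1 _ ih

lemma iterate_update_agree {f : Fin n → Fin n} {u v : Fin n} (b : Fin n)
    (h : ∀ k, f^[k] v ≠ u) (k : ℕ) : (Function.update f u b)^[k] v = f^[k] v := by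
  induction k with
  | zero => rfl
  | succ k ih =>
    rw [Function.iterate_succ_apply', Function.iterate_succ_apply', ih,
      Function.update_of_ne (h k)]

lemma orbit_ne_leaf {S : Finset (Fin n)} {f} (hf : IsPFun S f) {u v : Fin n}
    (hu : ∀ w ∈ S, f w ≠ u) (hv : v ∈ S) (hvu : v ≠ u) (k : ℕ) : f^[k] v ≠ u := by
  cases k with
  | zero => exact hvu
  | succ k =>
    rw [Function.iterate_succ_apply']
    exact hu _ (orbit_mem hf hv k)

lemma IsPFun.erase_leaf {S : Finset (Fin n)} {f} (hf : IsPFun S f) {u : Fin n}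
    (hu : u ∈ leafSet S f) : IsPFun (S.erase u) (Function.update f u u) := by
  obtain ⟨huS, hu0, hupre⟩ := mem_leafSet.1 hu
  refine ⟨?_, ?_, ?_, ?_⟩
  · intro w hw
    obtain ⟨hwu, hwS⟩ := Finset.mem_erase.1 hw
    rw [Function.update_of_ne hwu]
    exact Finset.mem_erase.2 ⟨hupre w hwS, hf.1 w hwS⟩
  · rw [Function.update_of_ne (Ne.symm hu0), hf.2.1]
  · intro w hw
    obtain ⟨hwu, hwS⟩ := Finset.mem_erase.1 hw
    obtain ⟨k, hk⟩ := hf.2.2.1 w hwS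
    exact ⟨k, by rw [iterate_update_agree _ (orbit_ne_leaf hf hupre hwS hwu)]; exact hk⟩
  · intro w hw
    rcases eq_or_ne w u with rfl | hne
    · exact Function.update_self _ _ _
    · rw [Function.update_of_ne hne]
      exact hf.2.2.2 w (fun hwS => hw (Finset.mem_erase.2 ⟨hne, hwS⟩))

lemma orbit_ne_of_erase {S : Finset (Fin n)} {g} {v : Fin n} (hg : IsPFun (S.erase v) g)
    {w : Fin n} (hw : w ∈ S.erase v) (k : ℕ) : g^[k] w ≠ v :=
  fun h => (Finset.mem_erase.1 (h ▸ orbit_mem hg hw k)).1 rfl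

lemma IsPFun.insert_leaf {S : Finset (Fin n)} {g} {v a : Fin n} (hg : IsPFun (S.erase v) g)
    (hvS : v ∈ S) (hv0 : v ≠ 0) (ha : a ∈ S.erase v) : IsPFun S (Function.update g v a) := by
  refine ⟨?_, ?_, ?_, ?_⟩
  · intro w hw
    rcases eq_or_ne w v with rfl | hne
    · rw [Function.update_self]; exact Finset.mem_of_mem_erase ha
    · rw [Function.update_of_ne hne]
      exact Finset.mem_of_mem_erase (hg.1 w (Finset.mem_erase.2 ⟨hne, hw⟩))
  · rw [Function.update_of_ne (Ne.symm hv0), hg.2.1]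
  · intro w hw
    rcases eq_or_ne w v with rfl | hne
    · obtain ⟨k, hk⟩ := hg.2.2.1 a ha
      refine ⟨k + 1, ?_⟩
      rw [Function.iterate_succ_apply, Function.update_self,
        iterate_update_agree _ (orbit_ne_of_erase hg ha)]
      exact hk
    · obtain ⟨k, hk⟩ := hg.2.2.1 w (Finset.mem_erase.2 ⟨hne, hw⟩)
      exact ⟨k, by
        rw [iterate_update_agree _ (orbit_ne_of_erase hg (Finset.mem_erase.2 ⟨hne, hw⟩))]
        exact hk⟩
  · intro w hw
    have hne : w ≠ v := fun h => hw (h ▸ hvS)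
    rw [Function.update_of_ne hne]
    exact hg.2.2.2 w (fun h => hw (Finset.mem_of_mem_erase h))

def encode (S : Finset (Fin n)) (f : Fin n → Fin n) : List (Fin n) :=
  if h : 2 < S.card ∧ (leafSet S f).Nonempty then
    f ((leafSet S f).max' h.2) ::
      encode (S.erase ((leafSet S f).max' h.2))
        (Function.update f ((leafSet S f).max' h.2) ((leafSet S f).max' h.2))
  else []
termination_by S.card
decreasing_by
  exact Finset.card_erase_lt_of_mem
    (Finset.mem_of_mem_erase (Finset.mem_of_mem_filter _ ((leafSet S f).max'_mem h.2)))

def decode (S : Finset (Fin n)) (l : List (Fin n)) : Fin n → Fin n :=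
  if h : (S.erase 0 \ l.toFinset).Nonempty then
    Function.update (decode (S.erase ((S.erase 0 \ l.toFinset).max' h)) l.tail)
      ((S.erase 0 \ l.toFinset).max' h) (l.headD 0)
  else id
termination_by S.card
decreasing_by
  exact Finset.card_erase_lt_of_mem
    (Finset.mem_of_mem_erase (Finset.mem_sdiff.1 ((S.erase 0 \ l.toFinset).max'_mem h)).1)

lemma max'_eq_of_eq {s t : Finset (Fin n)} (h : s = t) (hs : s.Nonempty) :
    s.max' hs = t.max' (h ▸ hs) := by subst h; rfl



lemma encode_spec (S : Finset (Fin n)) : ∀ f, 0 ∈ S → IsPFun S f →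
    (encode S f).length = S.card - 2 ∧ (∀ x ∈ encode S f, x ∈ S) ∧
    S.erase 0 \ (encode S f).toFinset = leafSet S f ∧ decode S (encode S f) = f := by
  induction S using Finset.strongInduction with
  | _ S ih =>
  intro f h0 hf
  have hc1 : 1 ≤ S.card := Finset.card_pos.2 ⟨0, h0⟩
  by_cases h2 : 2 < S.card
  · -- inductive step
    have hleaf : (leafSet S f).Nonempty := exists_leaf hf h0 (by omega)
    set v := (leafSet S f).max' hleaf with hvdef
    have hvleaf : v ∈ leafSet S f := (leafSet S f).max'_mem hleaf
    obtain ⟨hvS, hv0, hvpre⟩ := mem_leafSet.1 hvleaf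
    have hfvS : f v ∈ S := hf.1 v hvS
    have hfvv : f v ≠ v := hf.ne_self hvS hv0
    have henc : encode S f = f v :: encode (S.erase v) (Function.update f v v) := by
      rw [encode, dif_pos ⟨h2, hleaf⟩]
    set f' := Function.update f v v with hf'def
    set c' := encode (S.erase v) f' with hc'def
    have h0' : 0 ∈ S.erase v := Finset.mem_erase.2 ⟨Ne.symm hv0, h0⟩
    have hpf' : IsPFun (S.erase v) f' := hf.erase_leaf hvleaf
    obtain ⟨ihlen, ihmem, ihleaf, ihdec⟩ := ih _ (Finset.erase_ssubset hvS) f' h0' hpf'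
    have hcard : (S.erase v).card = S.card - 1 := Finset.card_erase_of_mem hvS
    have hvnc' : v ∉ c'.toFinset := by
      intro h
      exact (Finset.mem_erase.1 (ihmem v (List.mem_toFinset.1 h))).1 rfl
    have hmem : ∀ x ∈ encode S f, x ∈ S := by
      rw [henc]
      intro x hx
      rcases List.mem_cons.1 hx with rfl | hx
      · exact hfvS
      · exact Finset.mem_of_mem_erase (ihmem x hx)
    have hsetc : S.erase 0 \ (encode S f).toFinset = leafSet S f := by
      ext w
      constructor
      · intro hw
        obtain ⟨hw1, hw2⟩ := Finset.mem_sdiff.1 hw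
        obtain ⟨hw0, hwS⟩ := Finset.mem_erase.1 hw1
        rw [henc] at hw2
        simp only [List.toFinset_cons, Finset.mem_insert, not_or] at hw2
        obtain ⟨hwfv, hwc'⟩ := hw2
        rcases eq_or_ne w v with rfl | hwv
        · exact hvleaf
        · have hwl' : w ∈ leafSet (S.erase v) f' := by
            rw [← ihleaf]
            exact Finset.mem_sdiff.2
              ⟨Finset.mem_erase.2 ⟨hw0, Finset.mem_erase.2 ⟨hwv, hwS⟩⟩, hwc'⟩
          obtain ⟨_, _, hpre'⟩ := mem_leafSet.1 hwl'
          refine mem_leafSet.2 ⟨hwS, hw0, fun u hu => ?_⟩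
          rcases eq_or_ne u v with rfl | huv
          · exact fun h => hwfv h.symm
          · have := hpre' u (Finset.mem_erase.2 ⟨huv, hu⟩)
            rwa [hf'def, Function.update_of_ne huv] at this
      · intro hw
        obtain ⟨hwS, hw0, hpre⟩ := mem_leafSet.1 hw
        refine Finset.mem_sdiff.2 ⟨Finset.mem_erase.2 ⟨hw0, hwS⟩, ?_⟩
        rw [henc]
        simp only [List.toFinset_cons, Finset.mem_insert, not_or]
        refine ⟨fun h => hpre v hvS h.symm, ?_⟩
        rcases eq_or_ne w v with rfl | hwv
        · exact hvnc'
        · intro hwc'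
          have hwl' : w ∈ leafSet (S.erase v) f' := by
            refine mem_leafSet.2 ⟨Finset.mem_erase.2 ⟨hwv, hwS⟩, hw0, fun u hu => ?_⟩
            obtain ⟨huv, huS⟩ := Finset.mem_erase.1 hu
            rw [hf'def, Function.update_of_ne huv]
            exact hpre u huS
          rw [← ihleaf] at hwl'
          exact (Finset.mem_sdiff.1 hwl').2 hwc'
    refine ⟨?_, hmem, hsetc, ?_⟩
    · rw [henc]
      simp only [List.length_cons, ihlen, hcard]
      rw [show c'.length = (S.erase v).card - 2 from ihlen, hcard]
      omega
    · -- decode ∘ encode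
      have hsetc' : S.erase 0 \ (f v :: c').toFinset = leafSet S f := by
        rw [← henc]; exact hsetc
      have hne : (S.erase 0 \ (f v :: c').toFinset).Nonempty := by
        rw [hsetc']; exact hleaf
      rw [henc, decode, dif_pos hne]
      have hmax : (S.erase 0 \ (f v :: c').toFinset).max' hne = v := by
        rw [max'_eq_of_eq hsetc' hne]
      rw [hmax]
      simp only [List.tail_cons, List.headD_cons]
      rw [ihdec, hf'def, Function.update_idem, Function.update_eq_self]
  · -- base cases
    have henc0 : encode S f = [] := by
      rw [encode, dif_neg (fun h => h2 h.1)]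
    have hcle : S.card ≤ 2 := by omega
    rcases (by omega : S.card = 1 ∨ S.card = 2) with hc | hc
    · have hS : S = {0} := by
        obtain ⟨a, ha⟩ := Finset.card_eq_one.1 hc
        rw [ha]; rw [ha] at h0
        rw [Finset.mem_singleton.1 h0]
      subst hS
      have he0 : ({0} : Finset (Fin n)).erase 0 = ∅ := Finset.erase_singleton 0
      have hleafe : leafSet ({0} : Finset (Fin n)) f = ∅ := by
        rw [leafSet, he0, Finset.filter_empty]
      refine ⟨by simp [henc0], by simp [henc0], by simp [henc0, he0, hleafe], ?_⟩
      rw [henc0, decode, dif_neg (by simp [he0])]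
      funext w
      rcases eq_or_ne w 0 with rfl | hw0
      · exact hf.2.1.symm
      · exact (hf.2.2.2 w (by simp [hw0])).symm
    · obtain ⟨a, ha⟩ := Finset.card_eq_one.1
        (by rw [Finset.card_erase_of_mem h0]; omega : (S.erase 0).card = 1)
      have ha0 : a ≠ 0 := (Finset.mem_erase.1 (ha ▸ Finset.mem_singleton_self a)).1
      have haS : a ∈ S := Finset.mem_of_mem_erase (ha ▸ Finset.mem_singleton_self a)
      have hmemS : ∀ w ∈ S, w = 0 ∨ w = a := by
        intro w hw
        rcases eq_or_ne w 0 with rfl | hw0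
        · exact Or.inl rfl
        · exact Or.inr (Finset.mem_singleton.1 (ha ▸ Finset.mem_erase.2 ⟨hw0, hw⟩))
      have hfa : f a = 0 := by
        rcases hmemS (f a) (hf.1 a haS) with h | h
        · exact h
        · exact absurd h (hf.ne_self haS ha0)
      have hleafa : leafSet S f = {a} := by
        ext w
        rw [mem_leafSet, Finset.mem_singleton]
        constructor
        · rintro ⟨hwS, hw0, -⟩
          rcases hmemS w hwS with rfl | rfl
          · exact absurd rfl hw0
          · rfl
        · rintro rfl
          refine ⟨haS, ha0, fun u hu => ?_⟩
          rcases hmemS u hu with rfl | rfl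
          · rw [hf.2.1]; exact Ne.symm ha0
          · rw [hfa]; exact Ne.symm ha0
      refine ⟨by simp [henc0, hc], by simp [henc0], by simp [henc0, ha, hleafa], ?_⟩
      have hne : (S.erase 0 \ ([] : List (Fin n)).toFinset).Nonempty := by
        simp [ha]
      rw [henc0, decode, dif_pos hne]
      have hmax : (S.erase 0 \ ([] : List (Fin n)).toFinset).max' hne = a := by
        rw [max'_eq_of_eq (show S.erase 0 \ ([] : List (Fin n)).toFinset = {a} by simp [ha]) hne]
        exact Finset.max'_singleton a
      rw [hmax]
      have hSa : (S.erase a).erase 0 = ∅ := by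
        ext w
        simp only [Finset.mem_erase, Finset.notMem_empty, iff_false, not_and]
        intro hw0 hwa hwS
        rcases hmemS w hwS with rfl | rfl
        · exact absurd rfl hw0
        · exact absurd rfl hwa
      rw [decode, dif_neg (by simp [hSa])]
      funext w
      rcases eq_or_ne w a with rfl | hwa
      · simp [Function.update_self, hfa]
      · rw [Function.update_of_ne hwa]
        rcases eq_or_ne w 0 with rfl | hw0
        · exact hf.2.1.symm
        · refine (hf.2.2.2 w (fun hw => ?_)).symm
          rcases hmemS w hw with rfl | rfl
          · exact hw0 rfl
          · exact hwa rfl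
lemma decode_spec (S : Finset (Fin n)) : ∀ l : List (Fin n), 0 ∈ S →
    l.length = S.card - 2 → (∀ x ∈ l, x ∈ S) →
    IsPFun S (decode S l) ∧ leafSet S (decode S l) = S.erase 0 \ l.toFinset ∧
    encode S (decode S l) = l := by
  induction S using Finset.strongInduction with
  | _ S ih =>
  intro l h0 hlen hmem
  have hc1 : 1 ≤ S.card := Finset.card_pos.2 ⟨0, h0⟩
  by_cases h2 : 2 < S.card
  · -- step
    have hlpos : l ≠ [] := by
      intro h; rw [h] at hlen; simp at hlen; omega
    obtain ⟨a, l', rfl⟩ := List.exists_cons_of_ne_nil hlpos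
    simp only [List.length_cons] at hlen
    have haS : a ∈ S := hmem a List.mem_cons_self
    have hT : (S.erase 0 \ (a :: l').toFinset).Nonempty := by
      rw [← Finset.card_pos]
      have h1 := Finset.le_card_sdiff ((a :: l').toFinset) (S.erase 0)
      have h2' : ((a :: l').toFinset).card ≤ l'.length + 1 := by
        simpa using List.toFinset_card_le (a :: l')
      rw [Finset.card_erase_of_mem h0] at h1
      omega
    set v := (S.erase 0 \ (a :: l').toFinset).max' hT with hvdef
    have hvT : v ∈ S.erase 0 \ (a :: l').toFinset := Finset.max'_mem _ hT
    obtain ⟨hv1, hv2⟩ := Finset.mem_sdiff.1 hvT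
    obtain ⟨hv0, hvS⟩ := Finset.mem_erase.1 hv1
    have hvl : v ∉ (a :: l') := fun h => hv2 (List.mem_toFinset.2 h)
    have hva : a ≠ v := fun h => hvl (h ▸ (List.mem_cons_self : a ∈ a :: l'))
    have hvl' : v ∉ l' := fun h => hvl (List.mem_cons_of_mem a h)
    have haev : a ∈ S.erase v := Finset.mem_erase.2 ⟨hva, haS⟩
    have hdec : decode S (a :: l') = Function.update (decode (S.erase v) l') v a := by
      rw [decode, dif_pos hT]
      simp only [List.tail_cons, List.headD_cons, ← hvdef]
    have h0' : 0 ∈ S.erase v := Finset.mem_erase.2 ⟨Ne.symm hv0, h0⟩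
    have hcard : (S.erase v).card = S.card - 1 := Finset.card_erase_of_mem hvS
    obtain ⟨ihpf, ihleaf, ihenc⟩ := ih (S.erase v) (Finset.erase_ssubset hvS) l' h0'
      (by omega)
      (fun x hx => Finset.mem_erase.2
        ⟨fun h => hvl' (h ▸ hx), hmem x (List.mem_cons_of_mem a hx)⟩)
    set g := decode (S.erase v) l' with hgdef
    have hgv : g v = v := ihpf.2.2.2 v (fun h => (Finset.mem_erase.1 h).1 rfl)
    have hpf : IsPFun S (Function.update g v a) := ihpf.insert_leaf hvS hv0 haev
    have hleafT : leafSet S (Function.update g v a) = S.erase 0 \ (a :: l').toFinset := by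
      ext w
      rw [mem_leafSet]
      simp only [Finset.mem_sdiff, Finset.mem_erase, List.toFinset_cons, Finset.mem_insert,
        not_or]
      constructor
      · rintro ⟨hwS, hw0, hpre⟩
        refine ⟨⟨hw0, hwS⟩,
          fun h => hpre v hvS (by rw [Function.update_self]; exact h.symm), ?_⟩
        rcases eq_or_ne w v with rfl | hwv
        · exact fun h => hvl' (List.mem_toFinset.1 h)
        · intro hwl'
          have hwl : w ∈ leafSet (S.erase v) g := by
            refine mem_leafSet.2 ⟨Finset.mem_erase.2 ⟨hwv, hwS⟩, hw0, fun u hu => ?_⟩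
            have huv : u ≠ v := (Finset.mem_erase.1 hu).1
            have := hpre u (Finset.mem_of_mem_erase hu)
            rwa [Function.update_of_ne huv] at this
          rw [ihleaf] at hwl
          exact (Finset.mem_sdiff.1 hwl).2 hwl'
      · rintro ⟨⟨hw0, hwS⟩, hwa, hwl'⟩
        refine ⟨hwS, hw0, fun u hu => ?_⟩
        rcases eq_or_ne u v with rfl | huv
        · rw [Function.update_self]; exact fun h => hwa h.symm
        · rw [Function.update_of_ne huv]
          rcases eq_or_ne w v with rfl | hwv
          · intro h
            exact (Finset.mem_erase.1
              (h ▸ ihpf.1 u (Finset.mem_erase.2 ⟨huv, hu⟩))).1 rfl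
          · have hwl : w ∈ leafSet (S.erase v) g := by
              rw [ihleaf]
              exact Finset.mem_sdiff.2
                ⟨Finset.mem_erase.2 ⟨hw0, Finset.mem_erase.2 ⟨hwv, hwS⟩⟩, hwl'⟩
            exact (mem_leafSet.1 hwl).2.2 u (Finset.mem_erase.2 ⟨huv, hu⟩)
    have hence : encode S (Function.update g v a) = a :: l' := by
      have hlne : (leafSet S (Function.update g v a)).Nonempty := by
        rw [hleafT]; exact hT
      rw [encode, dif_pos ⟨h2, hlne⟩]
      have hmax : (leafSet S (Function.update g v a)).max' hlne = v := by
        rw [max'_eq_of_eq hleafT hlne]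
      rw [hmax, Function.update_self, Function.update_idem]
      have hupg : Function.update g v v = g := by
        funext w
        rcases eq_or_ne w v with rfl | hw
        · rw [Function.update_self, hgv]
        · rw [Function.update_of_ne hw]
      rw [hupg, ihenc]
    rw [hdec]
    exact ⟨hpf, hleafT, hence⟩
  · -- base cases
    have hl0 : l = [] := List.length_eq_zero_iff.1 (by omega)
    subst hl0
    rcases (by omega : S.card = 1 ∨ S.card = 2) with hc | hc
    · have hS : S = {0} := by
        obtain ⟨b, hb⟩ := Finset.card_eq_one.1 hc
        rw [hb]; rw [hb] at h0
        rw [Finset.mem_singleton.1 h0]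
      subst hS
      have he0 : ({0} : Finset (Fin n)).erase 0 = ∅ := Finset.erase_singleton 0
      have hdec : decode ({0} : Finset (Fin n)) [] = id := by
        rw [decode, dif_neg (by simp [he0])]
      rw [hdec]
      refine ⟨⟨by simp, rfl, ?_, fun v _ => rfl⟩, ?_, ?_⟩
      · intro v hv
        exact ⟨0, by simp [Finset.mem_singleton.1 hv]⟩
      · rw [leafSet, he0, Finset.filter_empty]; simp [he0]
      · rw [encode, dif_neg (by simp)]
    · obtain ⟨a, ha⟩ := Finset.card_eq_one.1
        (by rw [Finset.card_erase_of_mem h0]; omega : (S.erase 0).card = 1)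
      have ha0 : a ≠ 0 := (Finset.mem_erase.1 (ha ▸ Finset.mem_singleton_self a)).1
      have haS : a ∈ S := Finset.mem_of_mem_erase (ha ▸ Finset.mem_singleton_self a)
      have hmemS : ∀ w ∈ S, w = 0 ∨ w = a := by
        intro w hw
        rcases eq_or_ne w 0 with rfl | hw0
        · exact Or.inl rfl
        · exact Or.inr (Finset.mem_singleton.1 (ha ▸ Finset.mem_erase.2 ⟨hw0, hw⟩))
      have hne : (S.erase 0 \ ([] : List (Fin n)).toFinset).Nonempty := by simp [ha]
      have hmax : (S.erase 0 \ ([] : List (Fin n)).toFinset).max' hne = a := by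
        rw [max'_eq_of_eq (show S.erase 0 \ ([] : List (Fin n)).toFinset = {a} by simp [ha])
          hne]
        exact Finset.max'_singleton a
      have hSa : (S.erase a).erase 0 = ∅ := by
        ext w
        simp only [Finset.mem_erase, Finset.notMem_empty, iff_false, not_and]
        intro hw0 hwa hwS
        rcases hmemS w hwS with rfl | rfl
        · exact absurd rfl hw0
        · exact absurd rfl hwa
      have hdec : decode S ([] : List (Fin n)) = Function.update id a 0 := by
        rw [decode, dif_pos hne, hmax]
        rw [decode, dif_neg (by simp [hSa])]
        rfl
      rw [hdec]
      have hf0 : Function.update id a 0 0 = 0 := by rw [Function.update_of_ne (Ne.symm ha0)]; rfl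
      refine ⟨⟨?_, hf0, ?_, ?_⟩, ?_, ?_⟩
      · intro w hw
        rcases eq_or_ne w a with rfl | hwa
        · rw [Function.update_self]; exact h0
        · rw [Function.update_of_ne hwa]; exact hw
      · intro w hw
        rcases eq_or_ne w a with rfl | hwa
        · exact ⟨1, by simp [Function.update_self]⟩
        · rcases hmemS w hw with rfl | rfl
          · exact ⟨0, rfl⟩
          · exact absurd rfl hwa
      · intro w hw
        have hwa : w ≠ a := fun h => hw (by rw [h]; exact haS)
        rw [Function.update_of_ne hwa]; rfl
      · ext w
        rw [mem_leafSet]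
        simp only [List.toFinset_nil, Finset.sdiff_empty, Finset.mem_erase]
        constructor
        · rintro ⟨hwS, hw0, -⟩
          exact ⟨hw0, hwS⟩
        · rintro ⟨hw0, hwS⟩
          refine ⟨hwS, hw0, fun u hu => ?_⟩
          rcases hmemS w hwS with rfl | rfl
          · exact absurd rfl hw0
          rcases hmemS u hu with rfl | rfl
          · rw [hf0]; exact Ne.symm ha0
          · rw [Function.update_self]; exact Ne.symm ha0
      · rw [encode, dif_neg (fun h => h2 h.1)]

noncomputable def pfunCodeEquiv (S : Finset (Fin n)) (h0 : 0 ∈ S) :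
    {f : Fin n → Fin n // IsPFun S f} ≃
      {l : List (Fin n) // l.length = S.card - 2 ∧ ∀ x ∈ l, x ∈ S} where
  toFun f := ⟨encode S f.1, (encode_spec S f.1 h0 f.2).1, (encode_spec S f.1 h0 f.2).2.1⟩
  invFun l := ⟨decode S l.1, (decode_spec S l.1 h0 l.2.1 l.2.2).1⟩
  left_inv f := Subtype.ext (encode_spec S f.1 h0 f.2).2.2.2
  right_inv l := Subtype.ext (decode_spec S l.1 h0 l.2.1 l.2.2).2.2

lemma card_pfun : Nat.card {f : Fin n → Fin n // IsPFun (univ : Finset (Fin n)) f}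
    = n ^ (n - 2) := by
  rw [Nat.card_congr (pfunCodeEquiv univ (Finset.mem_univ 0))]
  have e1 : {l : List (Fin n) // l.length = (univ : Finset (Fin n)).card - 2 ∧
      ∀ x ∈ l, x ∈ (univ : Finset (Fin n))} ≃ {l : List (Fin n) // l.length = n - 2} :=
    Equiv.subtypeEquivRight (by simp)
  rw [Nat.card_congr e1]
  show Nat.card (List.Vector (Fin n) (n - 2)) = n ^ (n - 2)
  rw [Nat.card_congr (Equiv.vectorEquivFin (Fin n) (n - 2))]
  simp [Nat.card_eq_fintype_card]

open SimpleGraph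
def graphOf (f : Fin n → Fin n) : SimpleGraph (Fin n) where
  Adj v w := v ≠ w ∧ (f v = w ∨ f w = v)
  symm := ⟨by rintro v w ⟨h1, h2⟩; exact ⟨h1.symm, h2.symm⟩⟩
  loopless := ⟨fun v h => h.1 rfl⟩

lemma graphOf_adj {f : Fin n → Fin n} {v w} :
    (graphOf f).Adj v w ↔ v ≠ w ∧ (f v = w ∨ f w = v) := Iff.rfl

lemma graphOf_adj_parent {f : Fin n → Fin n} (hf : IsPFun Finset.univ f) {v : Fin n}
    (hv : v ≠ 0) : (graphOf f).Adj v (f v) :=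
  ⟨fun h => hf.ne_self (Finset.mem_univ v) hv h.symm, Or.inl rfl⟩

lemma dep_eq_zero {f : Fin n → Fin n} (hf : IsPFun Finset.univ f) {v : Fin n}
    (h : dep f v = 0) : v = 0 := by
  have := dep_spec (hf.2.2.1 v (Finset.mem_univ v))
  rwa [h] at this

lemma dep_parent {f : Fin n → Fin n} (hf : IsPFun Finset.univ f) {v w : Fin n} (hv : v ≠ 0)
    (hfv : f v = w) : dep f v = dep f w + 1 := by
  have h1 : dep f w < dep f v := hfv ▸ dep_apply_lt hf (Finset.mem_univ v) hv
  have h2 : dep f v ≤ dep f w + 1 := dep_le _ (by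
    rw [Function.iterate_succ_apply, hfv]
    exact dep_spec (hf.2.2.1 w (Finset.mem_univ w)))
  omega

lemma graphOf_reach_aux {f : Fin n → Fin n} (hf : IsPFun Finset.univ f) :
    ∀ d, ∀ v : Fin n, dep f v ≤ d → (graphOf f).Reachable v 0 := by
  intro d
  induction d with
  | zero =>
    intro v hv
    rw [dep_eq_zero hf (Nat.le_zero.1 hv)]
  | succ d ih =>
    intro v hv
    rcases eq_or_ne v 0 with rfl | hv0
    · rfl
    · have hadj := graphOf_adj_parent hf hv0
      have hlt : dep f (f v) < dep f v := dep_apply_lt hf (Finset.mem_univ v) hv0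
      exact hadj.reachable.trans (ih (f v) (by omega))

lemma graphOf_connected {f : Fin n → Fin n} (hf : IsPFun Finset.univ f) :
    (graphOf f).Connected := by
  rw [connected_iff]
  exact ⟨fun u v => (graphOf_reach_aux hf _ u le_rfl).trans
    (graphOf_reach_aux hf _ v le_rfl).symm, ⟨0⟩⟩

lemma graphOf_parent_of_max {f : Fin n → Fin n} (hf : IsPFun Finset.univ f) {m x : Fin n}
    (hadj : (graphOf f).Adj m x) (hmax : dep f x ≤ dep f m) : f m = x := by
  rcases hadj.2 with h | h
  · exact h
  · exfalso
    have hx0 : x ≠ 0 := by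
      rintro rfl
      exact hadj.1 (by rw [← hf.2.1, h])
    have := dep_parent hf hx0 h
    omega

lemma graphOf_acyclic {f : Fin n → Fin n} (hf : IsPFun Finset.univ f) :
    (graphOf f).IsAcyclic := by
  intro w c hcyc
  obtain ⟨m, hm, hmax⟩ := Finset.exists_max_image c.support.toFinset (dep f)
    ⟨w, List.mem_toFinset.2 c.start_mem_support⟩
  rw [List.mem_toFinset] at hm
  set c' := c.rotate m hm with hc'
  have hcyc' : c'.IsCycle := hcyc.rotate hm
  have hnn : ¬c'.Nil := hcyc'.not_nil
  obtain ⟨x, hadjx, q, hq⟩ := Walk.not_nil_iff.1 hnn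
  have hnnr : ¬c'.reverse.Nil := by
    rw [Walk.nil_iff_length_eq, Walk.length_reverse]
    rw [Walk.nil_iff_length_eq] at hnn
    exact hnn
  obtain ⟨y, hadjy, q', hq'⟩ := Walk.not_nil_iff.1 hnnr
  -- memberships in c.support
  have hrot := Walk.support_rotate c m hm
  have hxc : x ∈ c.support := by
    have hx1 : x ∈ c'.support.tail := by
      rw [hq, Walk.support_cons]
      exact q.start_mem_support
    exact List.mem_of_mem_tail (hrot.mem_iff.1 hx1)
  have hyc : y ∈ c.support := by
    have hy1 : y ∈ c'.support := by
      have : y ∈ c'.reverse.support := by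
        rw [hq', Walk.support_cons]
        exact List.mem_cons_of_mem _ q'.start_mem_support
      rwa [Walk.support_reverse, List.mem_reverse] at this
    have hy2 : y ∈ c'.support.tail := by
      rw [hq, Walk.support_cons, List.tail_cons]
      rw [hq, Walk.support_cons] at hy1
      rcases List.mem_cons.1 hy1 with hy2 | hy2
      · exact absurd hy2 hadjy.ne'
      · exact hy2
    exact List.mem_of_mem_tail (hrot.mem_iff.1 hy2)
  have hfmx : f m = x :=
    graphOf_parent_of_max hf hadjx (hmax x (List.mem_toFinset.2 hxc))
  have hfmy : f m = y :=
    graphOf_parent_of_max hf hadjy (hmax y (List.mem_toFinset.2 hyc))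
  have hxy : x = y := by rw [← hfmx, hfmy]
  -- edge list contradiction
  have hedges : c'.edges = s(m, x) :: q.edges := by rw [hq, Walk.edges_cons]
  have hc'rev : c' = q'.reverse.append (Walk.cons hadjy.symm Walk.nil) := by
    rw [← Walk.reverse_reverse c', hq', Walk.reverse_cons]
  have hedges2 : c'.edges = q'.reverse.edges ++ [s(y, m)] := by
    rw [hc'rev, Walk.edges_append, Walk.edges_cons, Walk.edges_nil]
  have hq'ne : q'.reverse.edges ≠ [] := by
    have h3 := hcyc'.three_le_length
    have hlq' : q'.length + 1 = c'.length := by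
      rw [← Walk.length_reverse c', hq', Walk.length_cons]
    intro h
    have := q'.reverse.length_edges
    rw [h, Walk.length_reverse] at this
    simp at this
    omega
  obtain ⟨e, t, het⟩ := List.exists_cons_of_ne_nil hq'ne
  have heq : s(m, x) :: q.edges = e :: (t ++ [s(y, m)]) := by
    rw [← hedges, hedges2, het]; rfl
  have hqe : q.edges = t ++ [s(y, m)] := (List.cons_eq_cons.1 heq).2
  have hmem : s(m, x) ∈ q.edges := by
    rw [hqe, hxy]
    exact List.mem_append_right _ (by simp [Sym2.eq_swap])
  have hnd := hcyc'.edges_nodup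
  rw [hedges] at hnd
  exact (List.nodup_cons.1 hnd).1 hmem

lemma graphOf_isTree {f : Fin n → Fin n} (hf : IsPFun Finset.univ f) :
    (graphOf f).IsTree :=
  ⟨graphOf_connected hf, graphOf_acyclic hf⟩

noncomputable def pathTo {G : SimpleGraph (Fin n)} (hG : G.IsTree) (v : Fin n) : G.Walk v 0 :=
  (hG.existsUnique_path v 0).choose

lemma pathTo_isPath {G : SimpleGraph (Fin n)} (hG : G.IsTree) (v : Fin n) :
    (pathTo hG v).IsPath := (hG.existsUnique_path v 0).choose_spec.1

lemma pathTo_unique {G : SimpleGraph (Fin n)} (hG : G.IsTree) {v : Fin n} (p : G.Walk v 0)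
    (hp : p.IsPath) : p = pathTo hG v := (hG.existsUnique_path v 0).choose_spec.2 p hp

noncomputable def treeFun {G : SimpleGraph (Fin n)} (hG : G.IsTree) : Fin n → Fin n :=
  fun v => (pathTo hG v).getVert 1

lemma treeFun_zero {G : SimpleGraph (Fin n)} (hG : G.IsTree) : treeFun hG 0 = 0 := by
  have h : (Walk.nil : G.Walk 0 0) = pathTo hG 0 := pathTo_unique hG _ Walk.IsPath.nil
  rw [treeFun, ← h]
  rfl

lemma pathTo_not_nil {G : SimpleGraph (Fin n)} (hG : G.IsTree) {v : Fin n} (hv : v ≠ 0) :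
    ¬(pathTo hG v).Nil := Walk.not_nil_of_ne hv

lemma treeFun_spec {G : SimpleGraph (Fin n)} (hG : G.IsTree) {v : Fin n} (hv : v ≠ 0) :
    G.Adj v (treeFun hG v) ∧
      (pathTo hG (treeFun hG v)).length < (pathTo hG v).length := by
  obtain ⟨x, hadj, q, hq⟩ := Walk.not_nil_iff.1 (pathTo_not_nil hG hv)
  have hx : treeFun hG v = x := by
    rw [treeFun, hq, Walk.getVert_cons_succ, Walk.getVert_zero]
  have hqp : q.IsPath := by
    have := pathTo_isPath hG v
    rw [hq, Walk.cons_isPath_iff] at this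
    exact this.1
  have hquniq : q = pathTo hG x := pathTo_unique hG q hqp
  constructor
  · rw [hx]; exact hadj
  · rw [hx, ← hquniq]
    have : (pathTo hG v).length = q.length + 1 := by rw [hq, Walk.length_cons]
    omega

lemma treeFun_isPFun {G : SimpleGraph (Fin n)} (hG : G.IsTree) :
    IsPFun (Finset.univ : Finset (Fin n)) (treeFun hG) := by
  refine ⟨fun v _ => Finset.mem_univ _, treeFun_zero hG, fun v _ => ?_,
    fun v hv => absurd (Finset.mem_univ v) hv⟩
  suffices h : ∀ d, ∀ w : Fin n, (pathTo hG w).length ≤ d → ∃ k, (treeFun hG)^[k] w = 0 by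
    exact h _ v le_rfl
  intro d
  induction d with
  | zero =>
    intro w hw
    rcases eq_or_ne w 0 with rfl | hw0
    · exact ⟨0, rfl⟩
    · exfalso
      have := (treeFun_spec hG hw0).2
      omega
  | succ d ih =>
    intro w hw
    rcases eq_or_ne w 0 with rfl | hw0
    · exact ⟨0, rfl⟩
    · obtain ⟨hadj, hlt⟩ := treeFun_spec hG hw0
      obtain ⟨k, hk⟩ := ih (treeFun hG w) (by omega)
      exact ⟨k + 1, by rw [Function.iterate_succ_apply]; exact hk⟩

noncomputable def fWalk (f : Fin n → Fin n) (hf : IsPFun Finset.univ f) :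
    (v : Fin n) → (graphOf f).Walk v 0 := fun v =>
  if h : v = 0 then (Walk.nil : (graphOf f).Walk 0 0).copy h.symm rfl
  else Walk.cons (graphOf_adj_parent hf h) (fWalk f hf (f v))
termination_by v => dep f v
decreasing_by exact dep_apply_lt hf (Finset.mem_univ v) h

lemma fWalk_spec (f : Fin n → Fin n) (hf : IsPFun Finset.univ f) :
    ∀ d, ∀ v : Fin n, dep f v ≤ d →
      (∀ u ∈ (fWalk f hf v).support, dep f u ≤ dep f v) ∧ (fWalk f hf v).IsPath := by
  intro d
  induction d with
  | zero =>
    intro v hv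
    have hv0 : v = 0 := dep_eq_zero hf (Nat.le_zero.1 hv)
    subst hv0
    rw [fWalk, dif_pos rfl]
    constructor
    · intro u hu
      rw [Walk.support_copy] at hu
      simp only [Walk.support_nil, List.mem_singleton] at hu
      subst hu; exact le_rfl
    · exact (Walk.isPath_copy _ _ _).2 Walk.IsPath.nil
  | succ d ih =>
    intro v hv
    rcases eq_or_ne v 0 with rfl | hv0
    · rw [fWalk, dif_pos rfl]
      constructor
      · intro u hu
        rw [Walk.support_copy] at hu
        simp only [Walk.support_nil, List.mem_singleton] at hu
        subst hu; exact le_rfl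
      · exact (Walk.isPath_copy _ _ _).2 Walk.IsPath.nil
    · have hlt : dep f (f v) < dep f v := dep_apply_lt hf (Finset.mem_univ v) hv0
      obtain ⟨ihs, ihp⟩ := ih (f v) (by omega)
      rw [fWalk, dif_neg hv0]
      constructor
      · intro u hu
        rw [Walk.support_cons] at hu
        rcases List.mem_cons.1 hu with rfl | hu
        · exact le_rfl
        · exact le_of_lt (lt_of_le_of_lt (ihs u hu) hlt)
      · rw [Walk.cons_isPath_iff]
        refine ⟨ihp, fun hmem => ?_⟩
        have := ihs v hmem
        omega

lemma treeFun_graphOf {f : Fin n → Fin n} (hf : IsPFun Finset.univ f) :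
    treeFun (graphOf_isTree hf) = f := by
  funext v
  rcases eq_or_ne v 0 with rfl | hv0
  · rw [treeFun_zero, hf.2.1]
  · have huniq : fWalk f hf v = pathTo (graphOf_isTree hf) v :=
      pathTo_unique _ _ (fWalk_spec f hf (dep f v) v le_rfl).2
    rw [treeFun, ← huniq, fWalk, dif_neg hv0, Walk.getVert_cons_succ, Walk.getVert_zero]

lemma graphOf_treeFun {G : SimpleGraph (Fin n)} (hG : G.IsTree) :
    graphOf (treeFun hG) = G := by
  ext v w
  rw [graphOf_adj]
  constructor
  · rintro ⟨hne, h | h⟩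
    · have hv0 : v ≠ 0 := by
        rintro rfl
        rw [treeFun_zero] at h
        exact hne h
      exact h ▸ (treeFun_spec hG hv0).1
    · have hw0 : w ≠ 0 := by
        rintro rfl
        rw [treeFun_zero] at h
        exact hne h.symm
      exact (h ▸ (treeFun_spec hG hw0).1).symm
  · intro h
    refine ⟨h.ne, ?_⟩
    set q := pathTo hG w with hqdef
    by_cases hvq : v ∈ q.support
    · right
      have htake : (q.takeUntil v hvq).IsPath := (pathTo_isPath hG w).takeUntil hvq
      have hsing : (Walk.cons h.symm Walk.nil : G.Walk w v).IsPath := by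
        rw [Walk.cons_isPath_iff]
        refine ⟨Walk.IsPath.nil, by simp; exact fun hw => h.ne hw.symm⟩
      have hequ : q.takeUntil v hvq = Walk.cons h.symm Walk.nil :=
        (hG.existsUnique_path w v).unique htake hsing
      have hq2 : q = Walk.cons h.symm (q.dropUntil v hvq) := by
        conv_lhs => rw [← q.take_spec hvq]
        rw [hequ, Walk.cons_append, Walk.nil_append]
      rw [treeFun, ← hqdef, hq2, Walk.getVert_cons_succ, Walk.getVert_zero]
    · left
      have hcons : (Walk.cons h q).IsPath := by
        rw [Walk.cons_isPath_iff]
        exact ⟨pathTo_isPath hG w, hvq⟩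
      have := pathTo_unique hG _ hcons
      rw [treeFun, ← this, Walk.getVert_cons_succ, Walk.getVert_zero]

noncomputable def treeEquiv :
    {G : SimpleGraph (Fin n) // G.IsTree} ≃ {f : Fin n → Fin n // IsPFun Finset.univ f} where
  toFun G := ⟨treeFun G.2, treeFun_isPFun G.2⟩
  invFun f := ⟨graphOf f.1, graphOf_isTree f.2⟩
  left_inv G := Subtype.ext (graphOf_treeFun G.2)
  right_inv f := Subtype.ext (treeFun_graphOf f.2)

end Cx

/-- Cayley's formula: the number of labeled trees on `n ≥ 1` vertices is `n^(n-2)`. -/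
theorem cayley_formula (n : ℕ) (hn : 1 ≤ n) :
    Nat.card {G : SimpleGraph (Fin n) // G.IsTree} = n ^ (n - 2) := by
  haveI : NeZero n := ⟨by omega⟩
  rw [Nat.card_congr (Cx.treeEquiv (n := n))]
  exact Cx.card_pfun
end

section
/- For any tree τ' on {1, ..., n+1}, deleting vertex n+1 and its incident edges, and then adding edges connecting the former neighbors of n+1 in increasing order into a path, yields a tree on {1, ..., n}. -/
/-- `pullGraph τ'` is the graph on `{1, ..., n}` obtained from `τ'` on `{1, ..., n+1}`
by deleting vertex `n+1` together with its incident edges and reconnecting the former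
neighbors of `n+1` in increasing order into a path (i.e. joining each neighbor to the
next larger neighbor). -/
def pullGraph {n : ℕ} (τ' : SimpleGraph (Fin (n + 1))) : SimpleGraph (Fin n) :=
  SimpleGraph.fromRel fun a b =>
    τ'.Adj a.castSucc b.castSucc ∨
    (a < b ∧ τ'.Adj a.castSucc (Fin.last n) ∧ τ'.Adj b.castSucc (Fin.last n) ∧
      ∀ c : Fin n, a < c → c < b → ¬ τ'.Adj c.castSucc (Fin.last n))

open SimpleGraph


lemma reachable_mono_adj {V : Type*} {G H : SimpleGraph V}
    (h : ∀ x y, G.Adj x y → H.Reachable x y) {u v : V} : G.Reachable u v → H.Reachable u v := by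
  rintro ⟨p⟩
  induction p with
  | nil => exact Reachable.refl _
  | cons ha q ih => exact (h _ _ ha).trans ih

lemma exists_connected_sub {V : Type*} [Fintype V] {G : SimpleGraph V} (hG : G.Connected)
    (hac : ¬ G.IsAcyclic) :
    ∃ G' : SimpleGraph V, G'.Connected ∧ G'.edgeSet.ncard + 1 = G.edgeSet.ncard := by
  classical
  obtain ⟨u, c, hc⟩ : ∃ (u : V) (c : G.Walk u u), c.IsCycle := by
    simpa [SimpleGraph.IsAcyclic] using hac
  have hne : c.edges ≠ [] := by
    have h3 := hc.three_le_length
    intro h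
    rw [← Walk.length_edges, h] at h3
    simp at h3
  obtain ⟨v, w, he⟩ : ∃ v w, s(v, w) ∈ c.edges := by
    rcases List.exists_mem_of_ne_nil _ hne with ⟨e, hmem⟩
    rcases e with ⟨v, w⟩
    exact ⟨v, w, hmem⟩
  have hvw : G.Adj v w ∧ (G \ fromEdgeSet {s(v, w)}).Reachable v w :=
    (adj_and_reachable_delete_edges_iff_exists_cycle).mpr ⟨u, c, hc, he⟩
  refine ⟨G \ fromEdgeSet {s(v, w)}, ?_, ?_⟩
  · have hne : Nonempty V := hG.nonempty
    refine ⟨fun x y => ?_⟩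
    refine reachable_mono_adj (fun x y hxy => ?_) (hG.preconnected x y)
    by_cases hcase : s(x, y) = s(v, w)
    · rw [Sym2.eq_iff] at hcase
      rcases hcase with ⟨rfl, rfl⟩ | ⟨rfl, rfl⟩
      · exact hvw.2
      · exact hvw.2.symm
    · exact SimpleGraph.Adj.reachable ⟨hxy, by simp [fromEdgeSet_adj, hcase]⟩
  · have hE : (G \ fromEdgeSet {s(v, w)}).edgeSet = G.edgeSet \ {s(v, w)} := by
      rw [edgeSet_sdiff, edgeSet_fromEdgeSet, edgeSet_sdiff_sdiff_isDiag]
    have hmem : s(v, w) ∈ G.edgeSet := hvw.1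
    rw [hE, Set.ncard_diff_singleton_of_mem hmem]
    have : 0 < G.edgeSet.ncard := by
      rw [Set.ncard_pos (Set.toFinite _)]
      exact ⟨_, hmem⟩
    omega

lemma connected_card_vert_le {V : Type*} [Fintype V] :
    ∀ (k : ℕ) (G : SimpleGraph V), G.edgeSet.ncard = k → G.Connected →
      Fintype.card V ≤ k + 1 := by
  intro k
  induction k using Nat.strong_induction_on with
  | _ k ih =>
    intro G hk hG
    by_cases hac : G.IsAcyclic
    · classical
      have ht : G.IsTree := ⟨hG, hac⟩
      have hcard := ht.card_edgeFinset
      rw [← hk, Set.ncard_eq_toFinset_card']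
      exact hcard.ge
    · obtain ⟨G', hG', hcard⟩ := exists_connected_sub hG hac
      have hlt : G'.edgeSet.ncard < k := by omega
      have := ih _ hlt G' rfl hG'
      omega

variable {n : ℕ} {τ' : SimpleGraph (Fin (n + 1))}

/-- `b` is a former neighbor of the removed vertex. -/
def Nbr (τ' : SimpleGraph (Fin (n + 1))) (b : Fin n) : Prop :=
  τ'.Adj b.castSucc (Fin.last n)

/-- `a` and `b` are consecutive neighbors of the removed vertex. -/
def Consec (τ' : SimpleGraph (Fin (n + 1))) (a b : Fin n) : Prop :=
  a < b ∧ Nbr τ' a ∧ Nbr τ' b ∧ ∀ c : Fin n, a < c → c < b → ¬ Nbr τ' c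

lemma pullGraph_adj_iff {a b : Fin n} :
    (pullGraph τ').Adj a b ↔
      τ'.Adj a.castSucc b.castSucc ∨ Consec τ' a b ∨ Consec τ' b a := by
  have hsymm : τ'.Adj b.castSucc a.castSucc ↔ τ'.Adj a.castSucc b.castSucc := adj_comm ..
  rw [pullGraph, fromRel_adj]
  unfold Consec Nbr
  constructor
  · rintro ⟨hne, h⟩
    tauto
  · intro h
    refine ⟨?_, by tauto⟩
    rintro rfl
    rcases h with h | h | h
    · exact h.ne rfl
    · exact absurd h.1 (lt_irrefl _)
    · exact absurd h.1 (lt_irrefl _)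

lemma chain_reachable :
    ∀ (k : ℕ) (a b : Fin n), Nbr τ' a → Nbr τ' b → b.val - a.val ≤ k → a ≤ b →
      (pullGraph τ').Reachable a b := by
  intro k
  induction k with
  | zero =>
    intro a b _ _ hk hab
    have : a = b := by
      apply Fin.ext
      rw [Fin.le_def] at hab
      omega
    subst this
    exact Reachable.refl _
  | succ k ih =>
    intro a b hNa hNb hk hab
    rcases eq_or_lt_of_le hab with rfl | hlt
    · exact Reachable.refl _
    · by_cases hcons : ∀ c : Fin n, a < c → c < b → ¬ Nbr τ' c
      · exact (pullGraph_adj_iff.mpr (Or.inr (Or.inl ⟨hlt, hNa, hNb, hcons⟩))).reachable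
      · push_neg at hcons
        obtain ⟨c, hac, hcb, hNc⟩ := hcons
        have hac' : a.val < c.val := hac
        have hcb' : c.val < b.val := hcb
        have h1 := ih a c hNa hNc (by omega) hac.le
        have h2 := ih c b hNc hNb (by omega) hcb.le
        exact h1.trans h2

lemma nbr_reachable {a b : Fin n} (ha : Nbr τ' a) (hb : Nbr τ' b) :
    (pullGraph τ').Reachable a b := by
  rcases le_total a b with h | h
  · exact chain_reachable (b.val - a.val) a b ha hb le_rfl h
  · exact (chain_reachable (a.val - b.val) b a hb ha le_rfl h).symm

lemma reachable_v0 {v0 : Fin n} (hv0 : Nbr τ' v0) :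
    ∀ (x y : Fin (n + 1)) (p : τ'.Walk x y), y = Fin.last n → ∀ a : Fin n, x = a.castSucc →
      (pullGraph τ').Reachable a v0 := by
  intro x y p
  induction p with
  | nil =>
    intro hy a ha
    rw [hy] at ha
    exact absurd ha.symm (Fin.castSucc_lt_last a).ne
  | @cons u v w h q ih =>
    intro hy a ha
    subst ha
    by_cases hv : v = Fin.last n
    · have hNa : Nbr τ' a := by rw [Nbr, ← hv]; exact h
      exact nbr_reachable hNa hv0
    · have hv' : v = (v.castPred hv).castSucc := (Fin.castSucc_castPred v hv).symm
      have hadj : (pullGraph τ').Adj a (v.castPred hv) :=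
        pullGraph_adj_iff.mpr (Or.inl (by rw [← hv']; exact h))
      exact hadj.reachable.trans (ih hy _ hv')

lemma exists_nbr (hn : 1 ≤ n) (hτ' : τ'.Connected) : ∃ v0 : Fin n, Nbr τ' v0 := by
  have h0 : (Fin.last n) ≠ (⟨0, by omega⟩ : Fin (n + 1)) := by
    intro h
    have := congrArg Fin.val h
    simp [Fin.last] at this
    omega
  obtain ⟨p⟩ := hτ'.preconnected (Fin.last n) ⟨0, by omega⟩
  have hnil : ¬ p.Nil := Walk.not_nil_of_ne h0
  have hadj : τ'.Adj (Fin.last n) (p.getVert 1) := p.adj_snd hnil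
  have hne : p.getVert 1 ≠ Fin.last n := hadj.ne'
  refine ⟨(p.getVert 1).castPred hne, ?_⟩
  rw [Nbr, Fin.castSucc_castPred]
  exact hadj.symm

lemma pullGraph_connected (hn : 1 ≤ n) (hτ' : τ'.Connected) : (pullGraph τ').Connected := by
  obtain ⟨v0, hv0⟩ := exists_nbr hn hτ'
  have hne : Nonempty (Fin n) := ⟨⟨0, hn⟩⟩
  refine ⟨fun a b => ?_⟩
  obtain ⟨p⟩ := hτ'.preconnected a.castSucc (Fin.last n)
  obtain ⟨q⟩ := hτ'.preconnected b.castSucc (Fin.last n)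
  exact (reachable_v0 hv0 _ _ p rfl a rfl).trans (reachable_v0 hv0 _ _ q rfl b rfl).symm

open Classical in
/-- Map each edge of the pulled graph to an edge of the original tree. -/
noncomputable def phi (τ' : SimpleGraph (Fin (n + 1))) : Sym2 (Fin n) → Sym2 (Fin (n + 1)) :=
  Sym2.lift ⟨fun a b =>
    if τ'.Adj a.castSucc b.castSucc then s(a.castSucc, b.castSucc)
    else s((min a b).castSucc, Fin.last n), by
      intro a b
      dsimp only
      by_cases h : τ'.Adj a.castSucc b.castSucc
      · rw [if_pos h, if_pos h.symm, Sym2.eq_swap]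
      · rw [if_neg h, if_neg (fun h' => h h'.symm), min_comm]⟩

lemma sym2_min_max (a b : Fin n) : s(a, b) = s(min a b, max a b) := by
  rcases le_total a b with h | h
  · rw [min_eq_left h, max_eq_right h]
  · rw [min_eq_right h, max_eq_left h, Sym2.eq_swap]

lemma consec_min_max {a b : Fin n} (h : (pullGraph τ').Adj a b)
    (hold : ¬ τ'.Adj a.castSucc b.castSucc) : Consec τ' (min a b) (max a b) := by
  rcases pullGraph_adj_iff.mp h with h' | h' | h'
  · exact absurd h' hold
  · rw [min_eq_left h'.1.le, max_eq_right h'.1.le]; exact h'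
  · rw [min_eq_right h'.1.le, max_eq_left h'.1.le]; exact h'

lemma consec_unique {m b c : Fin n} (h1 : Consec τ' m b) (h2 : Consec τ' m c) : b = c := by
  rcases lt_trichotomy b c with h | h | h
  · exact absurd h1.2.2.1 (h2.2.2.2 b h1.1 h)
  · exact h
  · exact absurd h2.2.2.1 (h1.2.2.2 c h2.1 h)

lemma pullGraph_edge_bound (hn : 1 ≤ n) (hτ' : τ'.IsTree) :
    (pullGraph τ').edgeSet.ncard + 1 ≤ n := by
  classical
  obtain ⟨v0, hv0⟩ := exists_nbr hn hτ'.isConnected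
  set S : Finset (Fin n) := Finset.univ.filter (fun b => Nbr τ' b) with hS
  have hSne : S.Nonempty := ⟨v0, by simp [hS, hv0]⟩
  set M := S.max' hSne with hM
  have hMN : Nbr τ' M := by
    have := S.max'_mem hSne
    simpa [hS] using this
  have hle : ∀ b, Nbr τ' b → b ≤ M := fun b hb => S.le_max' b (by simp [hS, hb])
  have hτcard : τ'.edgeSet.ncard = n := by
    have h := hτ'.card_edgeFinset
    rw [Fintype.card_fin] at h
    rw [Set.ncard_eq_toFinset_card']
    have he : τ'.edgeSet.toFinset = τ'.edgeFinset := rfl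
    rw [he]
    omega
  have hmaps : ∀ a b : Fin n, (pullGraph τ').Adj a b →
      phi τ' s(a, b) ∈ τ'.edgeSet \ {s(M.castSucc, Fin.last n)} := by
    intro a b hab
    rw [phi, Sym2.lift_mk]
    dsimp only
    by_cases hold : τ'.Adj a.castSucc b.castSucc
    · rw [if_pos hold]
      refine ⟨hold, ?_⟩
      simp only [Set.mem_singleton_iff, Sym2.eq_iff]
      rintro (⟨h1, h2⟩ | ⟨h1, h2⟩)
      · exact absurd h2 (Fin.castSucc_lt_last b).ne
      · exact absurd h1 (Fin.castSucc_lt_last a).ne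
    · rw [if_neg hold]
      have hc := consec_min_max hab hold
      refine ⟨hc.2.1, ?_⟩
      simp only [Set.mem_singleton_iff, Sym2.eq_iff]
      rintro (⟨h1, h2⟩ | ⟨h1, h2⟩)
      · have h3 : min a b < M := lt_of_lt_of_le hc.1 (hle _ hc.2.2.1)
        exact absurd (Fin.castSucc_injective n h1) h3.ne
      · exact absurd h1 (Fin.castSucc_lt_last _).ne
  have hinj0 : ∀ a b c d : Fin n, (pullGraph τ').Adj a b → (pullGraph τ').Adj c d →
      phi τ' s(a, b) = phi τ' s(c, d) → s(a, b) = s(c, d) := by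
    intro a b c d hab hcd heq
    rw [phi, Sym2.lift_mk, Sym2.lift_mk] at heq
    dsimp only at heq
    by_cases h1 : τ'.Adj a.castSucc b.castSucc <;>
      by_cases h2 : τ'.Adj c.castSucc d.castSucc
    · rw [if_pos h1, if_pos h2, Sym2.eq_iff] at heq
      rw [Sym2.eq_iff]
      rcases heq with ⟨ha, hb⟩ | ⟨ha, hb⟩
      · exact Or.inl ⟨Fin.castSucc_injective n ha, Fin.castSucc_injective n hb⟩
      · exact Or.inr ⟨Fin.castSucc_injective n ha, Fin.castSucc_injective n hb⟩
    · rw [if_pos h1, if_neg h2, Sym2.eq_iff] at heq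
      rcases heq with ⟨ha, hb⟩ | ⟨ha, hb⟩
      · exact absurd hb (Fin.castSucc_lt_last b).ne
      · exact absurd ha (Fin.castSucc_lt_last a).ne
    · rw [if_neg h1, if_pos h2, Sym2.eq_iff] at heq
      rcases heq with ⟨ha, hb⟩ | ⟨ha, hb⟩
      · exact absurd hb.symm (Fin.castSucc_lt_last d).ne
      · exact absurd hb.symm (Fin.castSucc_lt_last c).ne
    · rw [if_neg h1, if_neg h2, Sym2.eq_iff] at heq
      have hc1 := consec_min_max hab h1
      have hc2 := consec_min_max hcd h2
      have hmm : min a b = min c d := by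
        rcases heq with ⟨ha, _⟩ | ⟨ha, _⟩
        · exact Fin.castSucc_injective n ha
        · exact absurd ha (Fin.castSucc_lt_last _).ne
      rw [hmm] at hc1
      have hMM : max a b = max c d := consec_unique hc1 hc2
      rw [sym2_min_max a b, sym2_min_max c d, hmm, hMM]
  have hle2 : (pullGraph τ').edgeSet.ncard ≤
      (τ'.edgeSet \ {s(M.castSucc, Fin.last n)}).ncard := by
    refine Set.ncard_le_ncard_of_injOn (phi τ') ?_ ?_ (Set.toFinite _)
    · intro e he
      revert he
      refine Sym2.ind (fun a b he => hmaps a b he) e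
    · intro e1 he1 e2 he2 heq
      revert he1 he2 heq
      refine Sym2.inductionOn₂ e1 e2 (fun a b c d he1 he2 heq => ?_)
      exact hinj0 a b c d he1 he2 heq
  have hdiff : (τ'.edgeSet \ {s(M.castSucc, Fin.last n)}).ncard = n - 1 := by
    have hMN' : s(M.castSucc, Fin.last n) ∈ τ'.edgeSet := hMN
    rw [Set.ncard_diff_singleton_of_mem hMN', hτcard]
  omega

/-- Deleting the vertex `n+1` from a tree on `{1, ..., n+1}` and reconnecting its
former neighbors in increasing order into a path yields a tree on `{1, ..., n}`. -/
theorem pullGraph_isTree (n : ℕ) (hn : 1 ≤ n) (τ' : SimpleGraph (Fin (n + 1)))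
    (hτ' : τ'.IsTree) : (pullGraph τ').IsTree := by
  have hconn := pullGraph_connected hn hτ'.isConnected
  have hbound := pullGraph_edge_bound hn hτ'
  refine ⟨hconn, ?_⟩
  by_contra hac
  obtain ⟨G', hG'conn, hG'card⟩ := exists_connected_sub hconn hac
  have h1 := connected_card_vert_le _ G' rfl hG'conn
  rw [Fintype.card_fin] at h1
  omega
end

section
/- Let τ be a tree on {1,...,n} and let P = (v_1, ..., v_k) be a path in τ (k ≥ 1). The graph τ' on {1, ..., n+1} obtained from τ by deleting the k-1 edges of P and adding k edges from vertex n+1 to each of v_1, ..., v_k is a tree on n+1 vertices. -/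
open Finset SimpleGraph

/-- Mapping reachability along a map that sends edges to reachable pairs. -/
private lemma reachable_map_aux {V V' : Type*} {G : SimpleGraph V} {G' : SimpleGraph V'}
    (f : V → V') (h : ∀ a b, G.Adj a b → G'.Reachable (f a) (f b)) {u v : V}
    (huv : G.Reachable u v) : G'.Reachable (f u) (f v) := by
  obtain ⟨p⟩ := huv
  induction p with
  | nil => exact SimpleGraph.Reachable.refl _
  | cons ha _ ih => exact (h _ _ ha).trans ih

/-- In a connected non-acyclic graph some edge can be deleted keeping connectivity. -/
private lemma exists_delete {V : Type*} {G : SimpleGraph V} (hac : ¬ G.IsAcyclic)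
    (hconn : G.Connected) :
    ∃ e ∈ G.edgeSet, (G \ SimpleGraph.fromEdgeSet {e}).Connected ∧
      (G \ SimpleGraph.fromEdgeSet {e}).edgeSet = G.edgeSet \ {e} := by
  rw [SimpleGraph.isAcyclic_iff_forall_edge_isBridge] at hac
  push_neg at hac
  obtain ⟨e, he, hbr⟩ := hac
  induction e using Sym2.ind with | _ u v =>
  rw [SimpleGraph.isBridge_iff] at hbr
  push_neg at hbr
  have hadj : G.Adj u v := G.mem_edgeSet.mp he
  have hreach : (G \ SimpleGraph.fromEdgeSet {s(u, v)}).Reachable u v := hbr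
  refine ⟨s(u, v), he, ?_, ?_⟩
  · have hstep : ∀ a b, G.Adj a b →
        (G \ SimpleGraph.fromEdgeSet {s(u, v)}).Reachable a b := by
      intro a b hab
      by_cases hmem : s(a, b) = s(u, v)
      · rw [Sym2.eq_iff] at hmem
        rcases hmem with ⟨rfl, rfl⟩ | ⟨rfl, rfl⟩
        · exact hreach
        · exact hreach.symm
      · refine SimpleGraph.Adj.reachable ?_
        rw [SimpleGraph.sdiff_adj]
        exact ⟨hab, by simp [SimpleGraph.fromEdgeSet_adj, hmem]⟩
    haveI := hconn.nonempty
    exact ⟨fun x y => reachable_map_aux id hstep (hconn.preconnected x y)⟩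
  · have hnd : ¬ (s(u, v) : Sym2 V).IsDiag := by simp [hadj.ne]
    rw [SimpleGraph.edgeSet_sdiff, SimpleGraph.edgeSet_fromEdgeSet]
    ext f
    simp only [Set.mem_diff, Set.mem_singleton_iff, Set.mem_setOf_eq]
    constructor
    · rintro ⟨h1, h2⟩
      refine ⟨h1, fun hf => h2 ⟨hf, ?_⟩⟩
      subst hf; exact hnd
    · rintro ⟨h1, h2⟩
      exact ⟨h1, fun hf => h2 hf.1⟩

/-- A connected graph on a finite vertex set has at least `card V - 1` edges. -/
private lemma connected_card_le {V : Type*} [Fintype V] :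
    ∀ (m : ℕ) (G : SimpleGraph V) (_inst : Fintype G.edgeSet),
      G.edgeFinset.card = m → G.Connected → Fintype.card V ≤ m + 1 := by
  intro m
  induction m using Nat.strong_induction_on with
  | _ m ih =>
    intro G inst hcard hconn
    by_cases hac : G.IsAcyclic
    · have := SimpleGraph.IsTree.card_edgeFinset ⟨hconn, hac⟩
      omega
    · classical
      obtain ⟨e, he, hconn', hes⟩ := exists_delete hac hconn
      letI hfin : Fintype (G \ SimpleGraph.fromEdgeSet {e}).edgeSet := Fintype.ofFinite _
      have hsub : (G \ SimpleGraph.fromEdgeSet {e}).edgeFinset = G.edgeFinset.erase e := by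
        ext f
        simp only [SimpleGraph.mem_edgeFinset, Finset.mem_erase, hes, Set.mem_diff,
          Set.mem_singleton_iff]
        tauto
      have hemem : e ∈ G.edgeFinset := SimpleGraph.mem_edgeFinset.mpr he
      have hm : 1 ≤ m := hcard ▸ Finset.card_pos.mpr ⟨e, hemem⟩
      have hcard' : (G \ SimpleGraph.fromEdgeSet {e}).edgeFinset.card = m - 1 := by
        rw [hsub, Finset.card_erase_of_mem hemem, hcard]
      have := ih (m - 1) (by omega) _ hfin hcard' hconn'
      omega

/-- A connected graph with `card V - 1` edges is a tree. -/
private lemma isTree_of_connected_of_card {V : Type*} [Fintype V] (G : SimpleGraph V)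
    [inst : Fintype G.edgeSet] (hconn : G.Connected)
    (hcard : G.edgeFinset.card + 1 = Fintype.card V) : G.IsTree := by
  refine ⟨hconn, ?_⟩
  by_contra hac
  classical
  obtain ⟨e, he, hconn', hes⟩ := exists_delete hac hconn
  letI hfin : Fintype (G \ SimpleGraph.fromEdgeSet {e}).edgeSet := Fintype.ofFinite _
  have hsub : (G \ SimpleGraph.fromEdgeSet {e}).edgeFinset = G.edgeFinset.erase e := by
    ext f
    simp only [SimpleGraph.mem_edgeFinset, Finset.mem_erase, hes, Set.mem_diff,
      Set.mem_singleton_iff]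
    tauto
  have hemem : e ∈ G.edgeFinset := SimpleGraph.mem_edgeFinset.mpr he
  have hm : 1 ≤ G.edgeFinset.card := Finset.card_pos.mpr ⟨e, hemem⟩
  have hcard' : (G \ SimpleGraph.fromEdgeSet {e}).edgeFinset.card = G.edgeFinset.card - 1 := by
    rw [hsub, Finset.card_erase_of_mem hemem]
  have := connected_card_le _ (G \ SimpleGraph.fromEdgeSet {e}) hfin hcard' hconn'
  omega

/-- Given a graph `τ` on `{1, ..., n}` and a path `w 0, ..., w k` in it, `pushGraph`
is the graph on `{1, ..., n+1}` obtained by deleting the `k` edges of the path and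
connecting each of its vertices to the new vertex `n+1`. -/
def pushGraph {n k : ℕ} (τ : SimpleGraph (Fin n)) (w : Fin (k + 1) → Fin n) :
    SimpleGraph (Fin (n + 1)) :=
  SimpleGraph.fromRel fun a b =>
    (∃ a' b' : Fin n, a = a'.castSucc ∧ b = b'.castSucc ∧ τ.Adj a' b' ∧
      ¬ ∃ i : Fin k, (w i.castSucc = a' ∧ w i.succ = b') ∨
        (w i.castSucc = b' ∧ w i.succ = a')) ∨
    (a = Fin.last n ∧ ∃ i : Fin (k + 1), b = (w i).castSucc)

/-- Replacing the edges of a path in a tree on `n` vertices with edges from each path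
vertex to a new vertex `n+1` yields a tree on `n+1` vertices. -/
theorem pushGraph_isTree (n k : ℕ) (τ : SimpleGraph (Fin n)) (hτ : τ.IsTree)
    (w : Fin (k + 1) → Fin n) (hinj : Function.Injective w)
    (hadj : ∀ i : Fin k, τ.Adj (w i.castSucc) (w i.succ)) :
    (pushGraph τ w).IsTree := by
  classical
  set G := pushGraph τ w with hG
  have hne_last : ∀ x : Fin n, x.castSucc ≠ Fin.last n := fun x => (Fin.castSucc_lt_last x).ne
  have hub_adj : ∀ i : Fin (k + 1), G.Adj (Fin.last n) ((w i).castSucc) := by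
    intro i
    rw [hG, pushGraph, SimpleGraph.fromRel_adj]
    exact ⟨(hne_last (w i)).symm, Or.inl (Or.inr ⟨rfl, i, rfl⟩)⟩
  have old_adj : ∀ a b : Fin n, τ.Adj a b →
      (¬ ∃ i : Fin k, (w i.castSucc = a ∧ w i.succ = b) ∨
        (w i.castSucc = b ∧ w i.succ = a)) →
      G.Adj a.castSucc b.castSucc := by
    intro a b hab hnp
    rw [hG, pushGraph, SimpleGraph.fromRel_adj]
    exact ⟨fun h => hab.ne (Fin.castSucc_injective _ h),
      Or.inl (Or.inl ⟨a, b, rfl, rfl, hab, hnp⟩)⟩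
  have step : ∀ a b : Fin n, τ.Adj a b → G.Reachable a.castSucc b.castSucc := by
    intro a b hab
    by_cases hpe : ∃ i : Fin k, (w i.castSucc = a ∧ w i.succ = b) ∨
        (w i.castSucc = b ∧ w i.succ = a)
    · obtain ⟨i, ⟨h1, h2⟩ | ⟨h1, h2⟩⟩ := hpe
      · subst h1; subst h2
        exact ((hub_adj i.castSucc).symm.reachable).trans (hub_adj i.succ).reachable
      · subst h1; subst h2
        exact ((hub_adj i.succ).symm.reachable).trans (hub_adj i.castSucc).reachable
    · exact (old_adj a b hab hpe).reachable
  have key : ∀ x : Fin (n + 1), G.Reachable x (Fin.last n) := by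
    intro x
    by_cases hx : x = Fin.last n
    · subst hx; exact SimpleGraph.Reachable.refl _
    · obtain ⟨y, rfl⟩ := Fin.exists_castSucc_eq.mpr hx
      have h1 : τ.Reachable y (w 0) := hτ.isConnected.preconnected y (w 0)
      have h2 : G.Reachable y.castSucc ((w 0).castSucc) :=
        reachable_map_aux Fin.castSucc step h1
      exact h2.trans (hub_adj 0).symm.reachable
  have hconn : G.Connected := by
    haveI : Nonempty (Fin (n + 1)) := ⟨Fin.last n⟩
    exact ⟨fun x y => (key x).trans (key y).symm⟩
  -- edge counting
  set P : Finset (Sym2 (Fin n)) :=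
    Finset.univ.image (fun i : Fin k => s(w i.castSucc, w i.succ)) with hP
  set E1 : Finset (Sym2 (Fin (n + 1))) :=
    (τ.edgeFinset \ P).image (Sym2.map Fin.castSucc) with hE1
  set E2 : Finset (Sym2 (Fin (n + 1))) :=
    Finset.univ.image (fun i : Fin (k + 1) => s(Fin.last n, (w i).castSucc)) with hE2
  have hPsub : P ⊆ τ.edgeFinset := by
    intro e he
    rw [hP, Finset.mem_image] at he
    obtain ⟨i, -, rfl⟩ := he
    exact SimpleGraph.mem_edgeFinset.mpr (hadj i)
  have hPinj : Function.Injective (fun i : Fin k => s(w i.castSucc, w i.succ)) := by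
    intro i j hij
    simp only [Sym2.eq_iff] at hij
    rcases hij with ⟨h1, -⟩ | ⟨h1, h2⟩
    · exact Fin.castSucc_injective _ (hinj h1)
    · have h1' := congrArg Fin.val (hinj h1)
      have h2' := congrArg Fin.val (hinj h2)
      simp only [Fin.coe_castSucc, Fin.val_succ] at h1' h2'
      omega
  have hPcard : P.card = k := by
    rw [hP, Finset.card_image_of_injective _ hPinj, Finset.card_univ, Fintype.card_fin]
  have hE2inj : Function.Injective (fun i : Fin (k + 1) => s(Fin.last n, (w i).castSucc)) := by
    intro i j hij
    simp only [Sym2.eq_iff] at hij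
    rcases hij with ⟨-, h1⟩ | ⟨h1, -⟩
    · exact hinj (Fin.castSucc_injective _ h1)
    · exact absurd h1.symm (hne_last (w j))
  have hE2card : E2.card = k + 1 := by
    rw [hE2, Finset.card_image_of_injective _ hE2inj, Finset.card_univ, Fintype.card_fin]
  have hE1card : E1.card = τ.edgeFinset.card - k := by
    rw [hE1, Finset.card_image_of_injective _ (Sym2.map.injective (Fin.castSucc_injective n)),
      Finset.card_sdiff_of_subset hPsub, hPcard]
  have hdisj : Disjoint E1 E2 := by
    rw [Finset.disjoint_left]
    intro e he1 he2
    rw [hE1, Finset.mem_image] at he1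
    rw [hE2, Finset.mem_image] at he2
    obtain ⟨x, -, rfl⟩ := he1
    obtain ⟨i, -, hi⟩ := he2
    have hmem : Fin.last n ∈ Sym2.map Fin.castSucc x := by
      rw [← hi]; exact Sym2.mem_mk_left _ _
    rw [Sym2.mem_map] at hmem
    obtain ⟨y, -, hy⟩ := hmem
    exact hne_last y hy
  have hE : G.edgeFinset = E1 ∪ E2 := by
    ext e
    induction e using Sym2.ind with | _ a b =>
    simp only [SimpleGraph.mem_edgeFinset, SimpleGraph.mem_edgeSet, Finset.mem_union]
    constructor
    · intro h
      rw [hG, pushGraph, SimpleGraph.fromRel_adj] at h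
      obtain ⟨hne, h | h⟩ := h
      · rcases h with ⟨a', b', rfl, rfl, had, hnp⟩ | ⟨rfl, i, rfl⟩
        · left
          rw [hE1, Finset.mem_image]
          refine ⟨s(a', b'), Finset.mem_sdiff.mpr ⟨SimpleGraph.mem_edgeFinset.mpr had, ?_⟩,
            by rw [Sym2.map_pair_eq]⟩
          intro hmem
          rw [hP, Finset.mem_image] at hmem
          obtain ⟨i, -, hi⟩ := hmem
          rw [Sym2.eq_iff] at hi
          exact hnp ⟨i, hi⟩
        · right
          rw [hE2, Finset.mem_image]
          exact ⟨i, Finset.mem_univ _, rfl⟩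
      · rcases h with ⟨a', b', rfl, rfl, had, hnp⟩ | ⟨rfl, i, rfl⟩
        · left
          rw [hE1, Finset.mem_image]
          refine ⟨s(a', b'), Finset.mem_sdiff.mpr ⟨SimpleGraph.mem_edgeFinset.mpr had, ?_⟩,
            by rw [Sym2.map_pair_eq, Sym2.eq_swap]⟩
          intro hmem
          rw [hP, Finset.mem_image] at hmem
          obtain ⟨i, -, hi⟩ := hmem
          rw [Sym2.eq_iff] at hi
          exact hnp ⟨i, hi⟩
        · right
          rw [hE2, Finset.mem_image]
          exact ⟨i, Finset.mem_univ _, Sym2.eq_swap⟩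
    · rintro (h1 | h2)
      · rw [hE1, Finset.mem_image] at h1
        obtain ⟨x, hx, hmap⟩ := h1
        induction x using Sym2.ind with | _ a' b' =>
        rw [Finset.mem_sdiff] at hx
        obtain ⟨hxe, hxP⟩ := hx
        have had : τ.Adj a' b' := SimpleGraph.mem_edgeFinset.mp hxe
        have hnp : ¬ ∃ i : Fin k, (w i.castSucc = a' ∧ w i.succ = b') ∨
            (w i.castSucc = b' ∧ w i.succ = a') := by
          rintro ⟨i, hi⟩
          refine hxP ?_
          rw [hP, Finset.mem_image]
          exact ⟨i, Finset.mem_univ _, Sym2.eq_iff.mpr hi⟩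
        rw [Sym2.map_pair_eq, Sym2.eq_iff] at hmap
        rcases hmap with ⟨rfl, rfl⟩ | ⟨rfl, rfl⟩
        · exact old_adj a' b' had hnp
        · exact (old_adj a' b' had hnp).symm
      · rw [hE2, Finset.mem_image] at h2
        obtain ⟨i, -, hi⟩ := h2
        rw [Sym2.eq_iff] at hi
        rcases hi with ⟨rfl, rfl⟩ | ⟨rfl, rfl⟩
        · exact hub_adj i
        · exact (hub_adj i).symm
  have hm := SimpleGraph.IsTree.card_edgeFinset hτ
  rw [Fintype.card_fin] at hm
  have hk : k ≤ τ.edgeFinset.card := hPcard ▸ Finset.card_le_card hPsub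
  have hcard : G.edgeFinset.card = n := by
    rw [hE, Finset.card_union_of_disjoint hdisj, hE1card, hE2card]
    omega
  exact isTree_of_connected_of_card G hconn (by rw [hcard, Fintype.card_fin])
end
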